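/- If B ⊆ Σⁿ is (r,r)-guaranteed, then B is (r+2, r+2)-guaranteed. -/

import Mathlib

set_option linter.unusedSectionVars false
/-- Cost structure for edit distance (formerly `Levenshtein.Cost` in Mathlib). -/
structure Levenshtein.Cost (α β δ : Type*) where
  delete : α → δ
  insert : β → δ
  substitute : α → β → δ

/-- Unit costs (formerly `Levenshtein.defaultCost` in Mathlib). -/
def Levenshtein.defaultCost {α : Type*} [DecidableEq α] : Levenshtein.Cost α α ℕ where
  delete _ := 1
  insert _ := 1
  substitute a b := if a = b then 0 else 1

/-- Row step of the dynamic program (formerly `Levenshtein.impl` in Mathlib). -/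
def Levenshtein.impl {α β δ : Type*} [AddZeroClass δ] [Min δ]
    (C : Levenshtein.Cost α β δ) (xs : List α) (y : β)
    (d : {r : List δ // 0 < r.length}) : {r : List δ // 0 < r.length} :=
  let ⟨ds, w⟩ := d
  xs.zip (ds.zip ds.tail) |>.foldr
    (init := ⟨[C.insert y + ds.getLast (List.length_pos_iff.mp w)], by simp⟩)
    (fun ⟨x, d₀, d₁⟩ ⟨r, w⟩ =>
      ⟨min (C.delete x + r[0]) (min (C.insert y + d₀) (C.substitute x y + d₁)) :: r, by simp⟩)

/-- Formerly `suffixLevenshtein` in Mathlib. -/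
def suffixLevenshtein {α β δ : Type*} [AddZeroClass δ] [Min δ]
    (C : Levenshtein.Cost α β δ) (xs : List α) (ys : List β) :
    {r : List δ // 0 < r.length} :=
  ys.foldr
    (Levenshtein.impl C xs)
    (xs.foldr (init := ⟨[0], by simp⟩) (fun a ⟨r, w⟩ => ⟨(C.delete a + r[0]) :: r, by simp⟩))

/-- Formerly `levenshtein` in Mathlib. -/
def levenshtein {α β δ : Type*} [AddZeroClass δ] [Min δ]
    (C : Levenshtein.Cost α β δ) (xs : List α) (ys : List β) : δ :=
  let ⟨r, w⟩ := suffixLevenshtein C xs ys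
  r[0]

section LevPort
variable {α β δ : Type*} [AddZeroClass δ] [Min δ] (C : Levenshtein.Cost α β δ)

@[simp] theorem Levenshtein.defaultCost_delete {γ : Type*} [DecidableEq γ] (a : γ) :
    (Levenshtein.defaultCost : Levenshtein.Cost γ γ ℕ).delete a = 1 := rfl
@[simp] theorem Levenshtein.defaultCost_insert {γ : Type*} [DecidableEq γ] (a : γ) :
    (Levenshtein.defaultCost : Levenshtein.Cost γ γ ℕ).insert a = 1 := rfl
@[simp] theorem Levenshtein.defaultCost_substitute {γ : Type*} [DecidableEq γ] (a b : γ) :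
    (Levenshtein.defaultCost : Levenshtein.Cost γ γ ℕ).substitute a b = if a = b then 0 else 1 := rfl

theorem lev_port_head_eq {l t : List δ} {a : δ} (h : l = a :: t) (hp : 0 < l.length) :
    l = l[0]'hp :: t := by subst h; rfl

theorem lev_port_getElem_zero {l t : List δ} {a : δ} (h : l = a :: t) (hp : 0 < l.length) :
    l[0]'hp = a := by subst h; rfl

theorem lev_port_impl_cons (x : α) (xs : List α) (y : β) (d : {r : List δ // 0 < r.length})
    (h : δ) (ds : List δ) (hd : d.1 = h :: ds) (w : 0 < ds.length) :
    (Levenshtein.impl C (x :: xs) y d).1 =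
      min (C.delete x + (Levenshtein.impl C xs y ⟨ds, w⟩).1[0]'(Levenshtein.impl C xs y ⟨ds, w⟩).2)
        (min (C.insert y + h) (C.substitute x y + ds[0]'w)) :: (Levenshtein.impl C xs y ⟨ds, w⟩).1 := by
  obtain ⟨l, wl⟩ := d
  simp only at hd
  subst hd
  match ds, w with
  | d1 :: ds', _ => rfl

theorem lev_port_suffix_cons (x : α) (xs : List α) (ys : List β) :
    (suffixLevenshtein C (x :: xs) ys).1 =
      levenshtein C (x :: xs) ys :: (suffixLevenshtein C xs ys).1 := by
  induction ys with
  | nil => rfl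
  | cons y ys ih =>
    have h1 := lev_port_impl_cons C x xs y (suffixLevenshtein C (x :: xs) ys) _ _ ih
      (suffixLevenshtein C xs ys).2
    exact lev_port_head_eq h1 (suffixLevenshtein C (x :: xs) (y :: ys)).2

@[simp] theorem levenshtein_nil_nil : levenshtein C [] [] = 0 := rfl

@[simp] theorem levenshtein_nil_cons (y : β) (ys : List β) :
    levenshtein C [] (y :: ys) = C.insert y + levenshtein C [] ys := by
  cases ys <;> rfl

@[simp] theorem levenshtein_cons_nil (x : α) (xs : List α) :
    levenshtein C (x :: xs) [] = C.delete x + levenshtein C xs [] := rfl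

@[simp] theorem levenshtein_cons_cons (x : α) (xs : List α) (y : β) (ys : List β) :
    levenshtein C (x :: xs) (y :: ys) =
      min (C.delete x + levenshtein C xs (y :: ys))
        (min (C.insert y + levenshtein C (x :: xs) ys) (C.substitute x y + levenshtein C xs ys)) := by
  have h1 := lev_port_impl_cons C x xs y (suffixLevenshtein C (x :: xs) ys) _ _
    (lev_port_suffix_cons C x xs ys) (suffixLevenshtein C xs ys).2
  exact lev_port_getElem_zero h1 (suffixLevenshtein C (x :: xs) (y :: ys)).2

end LevPort

namespace EditAux

variable {α : Type*} [DecidableEq α]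

/-- A single alignment entry. -/
inductive Op (α : Type*) where
  | eq (a : α) | sub (a b : α) | del (a : α) | ins (b : α)

open Op

def opL : Op α → List α
  | .eq a => [a] | .sub a _ => [a] | .del a => [a] | .ins _ => []

def opR : Op α → List α
  | .eq a => [a] | .sub _ b => [b] | .del _ => [] | .ins b => [b]

def opC : Op α → ℕ
  | .eq _ => 0 | .sub _ _ => 1 | .del _ => 1 | .ins _ => 1

def Lft (al : List (Op α)) : List α := al.flatMap opL
def Rgt (al : List (Op α)) : List α := al.flatMap opR
def Cst (al : List (Op α)) : ℕ := (al.map opC).sum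

@[simp] lemma Lft_nil : Lft ([] : List (Op α)) = [] := rfl
@[simp] lemma Rgt_nil : Rgt ([] : List (Op α)) = [] := rfl
@[simp] lemma Cst_nil : Cst ([] : List (Op α)) = 0 := rfl
@[simp] lemma Lft_cons (o : Op α) (al) : Lft (o :: al) = opL o ++ Lft al := rfl
@[simp] lemma Rgt_cons (o : Op α) (al) : Rgt (o :: al) = opR o ++ Rgt al := rfl
@[simp] lemma Cst_cons (o : Op α) (al) : Cst (o :: al) = opC o + Cst al := rfl
@[simp] lemma Lft_append (al al' : List (Op α)) : Lft (al ++ al') = Lft al ++ Lft al' := by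
  simp [Lft]
@[simp] lemma Rgt_append (al al' : List (Op α)) : Rgt (al ++ al') = Rgt al ++ Rgt al' := by
  simp [Rgt]
@[simp] lemma Cst_append (al al' : List (Op α)) : Cst (al ++ al') = Cst al + Cst al' := by
  simp [Cst]

abbrev lev (l t : List α) : ℕ := levenshtein Levenshtein.defaultCost l t

lemma lev_nil_left (t : List α) : lev [] t = t.length := by
  induction t with
  | nil => simp
  | cons b t ih => simp [ih]; omega

lemma lev_nil_right (l : List α) : lev l [] = l.length := by
  induction l with
  | nil => simp
  | cons a l ih => simp [ih]; omega

lemma lev_le_del (a : α) (l t : List α) : lev (a :: l) t ≤ 1 + lev l t := by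
  cases t with
  | nil => simp [lev_nil_right]
  | cons b t => simp only [levenshtein_cons_cons]; exact min_le_left _ _

lemma lev_le_ins (b : α) (l t : List α) : lev l (b :: t) ≤ 1 + lev l t := by
  cases l with
  | nil => simp
  | cons a l =>
      simp only [levenshtein_cons_cons]
      exact le_trans (min_le_right _ _) (min_le_left _ _)

lemma lev_le_sub (a b : α) (l t : List α) :
    lev (a :: l) (b :: t) ≤ (if a = b then 0 else 1) + lev l t := by
  simp only [levenshtein_cons_cons]
  exact le_trans (min_le_right _ _) (min_le_right _ _) |>.trans (by simp)


lemma lev_cons_cons (a b : α) (l t : List α) :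
    lev (a :: l) (b :: t) =
      min (1 + lev l (b :: t))
        (min (1 + lev (a :: l) t) ((if a = b then 0 else 1) + lev l t)) := by
  simp only [levenshtein_cons_cons, Levenshtein.defaultCost_delete,
    Levenshtein.defaultCost_insert, Levenshtein.defaultCost_substitute]

/-- Soundness: an alignment bounds the edit distance by its cost. -/
lemma lev_le_Cst (al : List (Op α)) : lev (Lft al) (Rgt al) ≤ Cst al := by
  induction al with
  | nil => simp
  | cons o al ih =>
    cases o with
    | eq a =>
        simp only [Lft_cons, Rgt_cons, Cst_cons, opL, opR, opC, List.cons_append,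
          List.nil_append, List.singleton_append]
        calc lev (a :: Lft al) (a :: Rgt al) ≤ (if a = a then 0 else 1) + lev (Lft al) (Rgt al) :=
              lev_le_sub a a _ _
          _ ≤ 0 + Cst al := by simp [ih]
          _ = _ := by omega
    | sub a b =>
        simp only [Lft_cons, Rgt_cons, Cst_cons, opL, opR, opC, List.singleton_append]
        calc lev (a :: Lft al) (b :: Rgt al) ≤ (if a = b then 0 else 1) + lev (Lft al) (Rgt al) :=
              lev_le_sub a b _ _
          _ ≤ 1 + Cst al := by split <;> omega
    | del a =>
        simp only [Lft_cons, Rgt_cons, Cst_cons, opL, opR, opC, List.singleton_append,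
          List.nil_append]
        exact (lev_le_del a _ _).trans (by omega)
    | ins b =>
        simp only [Lft_cons, Rgt_cons, Cst_cons, opL, opR, opC, List.singleton_append,
          List.nil_append]
        exact (lev_le_ins b _ _).trans (by omega)

/-- Completeness: there is an alignment of cost at most the edit distance. -/
lemma exists_al (l : List α) : ∀ t : List α, ∃ al : List (Op α),
    Lft al = l ∧ Rgt al = t ∧ Cst al ≤ lev l t := by
  induction l with
  | nil =>
    intro t
    refine ⟨t.map Op.ins, ?_, ?_, ?_⟩ <;>
      induction t with
      | nil => simp
      | cons b t ih => simp_all [lev_nil_left, opL, opR, opC] <;> omega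
  | cons a l ihl =>
    intro t
    induction t with
    | nil =>
      have : ∀ l' : List α, ∃ al : List (Op α),
          Lft al = l' ∧ Rgt al = [] ∧ Cst al ≤ lev l' [] := by
        intro l'
        refine ⟨l'.map Op.del, ?_, ?_, ?_⟩ <;>
          induction l' with
          | nil => simp
          | cons a' l' ih => simp_all [lev_nil_right, opL, opR, opC] <;> omega
      exact this (a :: l)
    | cons b t iht =>
      obtain ⟨al₁, h₁l, h₁r, h₁c⟩ := ihl (b :: t)
      obtain ⟨al₂, h₂l, h₂r, h₂c⟩ := iht
      obtain ⟨al₃, h₃l, h₃r, h₃c⟩ := ihl t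
      rw [lev_cons_cons]
      rcases le_total (1 + lev l (b :: t))
        (min (1 + lev (a :: l) t) ((if a = b then 0 else 1) + lev l t)) with h | h
      · rw [min_eq_left h]
        exact ⟨Op.del a :: al₁, by simp [h₁l, opL], by simp [h₁r, opR],
          by simp [opC]; omega⟩
      · rw [min_eq_right h]
        rcases le_total (1 + lev (a :: l) t) ((if a = b then 0 else 1) + lev l t) with h' | h'
        · rw [min_eq_left h']
          exact ⟨Op.ins b :: al₂, by simp [h₂l, opL], by simp [h₂r, opR],
            by simp [opC]; omega⟩
        · rw [min_eq_right h']
          by_cases hab : a = b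
          · exact ⟨Op.eq a :: al₃, by simp [h₃l, opL], by simp [h₃r, opR, hab],
              by simp [opC, hab]; omega⟩
          · exact ⟨Op.sub a b :: al₃, by simp [h₃l, opL], by simp [h₃r, opR],
              by simp [opC, hab]; omega⟩

def flip1 : Op α → Op α
  | .eq a => .eq a | .sub a b => .sub b a | .del a => .ins a | .ins b => .del b

@[simp] lemma Lft_flip (al : List (Op α)) : Lft (al.map flip1) = Rgt al := by
  induction al with
  | nil => rfl
  | cons o al ih => cases o <;> simp_all [flip1, opL, opR]

@[simp] lemma Rgt_flip (al : List (Op α)) : Rgt (al.map flip1) = Lft al := by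
  induction al with
  | nil => rfl
  | cons o al ih => cases o <;> simp_all [flip1, opL, opR]

@[simp] lemma Cst_flip (al : List (Op α)) : Cst (al.map flip1) = Cst al := by
  induction al with
  | nil => rfl
  | cons o al ih => cases o <;> simp_all [flip1, opC]

lemma lev_symm_le (l t : List α) : lev t l ≤ lev l t := by
  obtain ⟨al, hl, hr, hc⟩ := exists_al l t
  have := lev_le_Cst (al.map flip1)
  simp [hl, hr] at this
  omega


/-- Compose two alignments (meaningful when `Rgt al₁ = Lft al₂`). -/
def comp : List (Op α) → List (Op α) → List (Op α)
  | .del a :: l₁, l₂ => .del a :: comp l₁ l₂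
  | [], .ins b :: l₂ => .ins b :: comp [] l₂
  | .eq a :: l₁, .ins b :: l₂ => .ins b :: comp (.eq a :: l₁) l₂
  | .sub a c :: l₁, .ins b :: l₂ => .ins b :: comp (.sub a c :: l₁) l₂
  | .ins c :: l₁, .ins b :: l₂ => .ins b :: comp (.ins c :: l₁) l₂
  | .eq a :: l₁, .eq _ :: l₂ => .eq a :: comp l₁ l₂
  | .eq a :: l₁, .sub _ b :: l₂ => .sub a b :: comp l₁ l₂
  | .eq a :: l₁, .del _ :: l₂ => .del a :: comp l₁ l₂
  | .sub a _ :: l₁, .eq x :: l₂ => .sub a x :: comp l₁ l₂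
  | .sub a _ :: l₁, .sub _ c :: l₂ => .sub a c :: comp l₁ l₂
  | .sub a _ :: l₁, .del _ :: l₂ => .del a :: comp l₁ l₂
  | .ins _ :: l₁, .eq x :: l₂ => .ins x :: comp l₁ l₂
  | .ins _ :: l₁, .sub _ c :: l₂ => .ins c :: comp l₁ l₂
  | .ins _ :: l₁, .del _ :: l₂ => comp l₁ l₂
  | _, _ => []
  termination_by l₁ l₂ => l₁.length + l₂.length

set_option maxHeartbeats 2000000 in
lemma comp_spec : ∀ l₁ l₂ : List (Op α), Rgt l₁ = Lft l₂ →
    Lft (comp l₁ l₂) = Lft l₁ ∧ Rgt (comp l₁ l₂) = Rgt l₂ ∧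
      Cst (comp l₁ l₂) ≤ Cst l₁ + Cst l₂ := by
  intro l₁ l₂ h
  induction l₁, l₂ using comp.induct with
  | case15 l₁ l₂ h1 h2 h3 h4 h5 h6 h7 h8 h9 h10 h11 h12 h13 h14 =>
    rcases l₁ with _ | ⟨o, l₁⟩ <;> rcases l₂ with _ | ⟨o', l₂⟩
    · exact ⟨by simp [comp.eq_def], by simp [comp.eq_def], by simp [comp.eq_def]⟩
    · cases o' <;>
        first
        | (exfalso; solve_by_elim)
        | (simp [opL, opR] at h)
    · cases o <;>
        first
        | (exfalso; solve_by_elim)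
        | (simp [opL, opR] at h)
    · cases o <;> cases o' <;>
        first
        | (exfalso; solve_by_elim)
        | (simp [opL, opR] at h)
  | _ =>
    first
    | (exact ⟨rfl, rfl, by simp⟩)
    | (try simp only [opL, opR, Lft_cons, Rgt_cons, Lft_nil, Rgt_nil, List.nil_append,
        List.singleton_append, List.cons.injEq] at h
       try obtain ⟨hx, h⟩ := h
       first
       | (rename_i ih; obtain ⟨h1, h2, h3⟩ := ih (by simp_all [opL, opR])
          subst_eqs
          refine ⟨?_, ?_, ?_⟩ <;>
            simp_all [comp, opL, opR, opC] <;> omega)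
       | simp_all)

lemma lev_triangle (x y z : List α) : lev x z ≤ lev x y + lev y z := by
  obtain ⟨al₁, h1l, h1r, h1c⟩ := exists_al x y
  obtain ⟨al₂, h2l, h2r, h2c⟩ := exists_al y z
  obtain ⟨g1, g2, g3⟩ := comp_spec al₁ al₂ (by rw [h1r, h2l])
  have := lev_le_Cst (comp al₁ al₂)
  rw [g1, g2, h1l, h2r] at this
  omega


def isSub : Op α → Bool | .sub _ _ => true | _ => false
def isDel : Op α → Bool | .del _ => true | _ => false
def isIns : Op α → Bool | .ins _ => true | _ => false

lemma len_balance (al : List (Op α)) :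
    (Lft al).length + al.countP isIns = (Rgt al).length + al.countP isDel := by
  induction al with
  | nil => simp
  | cons o al ih =>
    cases o <;> simp_all [opL, opR, isIns, isDel, List.countP_cons] <;> omega

lemma cst_counts (al : List (Op α)) :
    Cst al = al.countP isSub + al.countP isDel + al.countP isIns := by
  induction al with
  | nil => simp
  | cons o al ih =>
    cases o <;> simp_all [opC, isSub, isIns, isDel, List.countP_cons] <;> omega

lemma exists_one {P : Op α → Bool} {al : List (Op α)} (h : 1 ≤ al.countP P) :
    ∃ p o q, al = p ++ o :: q ∧ P o := by
  have : ∃ o ∈ al, P o := List.countP_pos_iff.mp (by omega)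
  obtain ⟨o, ho, hPo⟩ := this
  obtain ⟨p, q, rfl⟩ := List.append_of_mem ho
  exact ⟨p, o, q, rfl, hPo⟩

lemma exists_two {P Q : Op α → Bool} {al : List (Op α)}
    (h2 : 2 ≤ al.countP P + al.countP Q) (hP : 1 ≤ al.countP P) (hQ : 1 ≤ al.countP Q)
    (hdisj : ∀ o, ¬(P o = true ∧ Q o = true)) :
    ∃ p o₁ q o₂ s, al = p ++ o₁ :: q ++ o₂ :: s ∧
      ((P o₁ ∧ Q o₂) ∨ (Q o₁ ∧ P o₂)) := by
  obtain ⟨p, o, q, rfl, hPo⟩ := exists_one hP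
  have hq : Q o = false := by
    rcases hq : Q o with _ | _
    · rfl
    · exact absurd ⟨hPo, hq⟩ (hdisj o)
  have : 1 ≤ p.countP Q + q.countP Q := by
    have := hQ
    simp [List.countP_append, List.countP_cons, hq] at this
    omega
  rcases Nat.lt_or_ge 0 (q.countP Q) with hh | hh
  · obtain ⟨q₁, o₂, q₂, rfl, hQo₂⟩ := exists_one (P := Q) (al := q) (by omega)
    exact ⟨p, o, q₁, o₂, q₂, by simp, Or.inl ⟨hPo, hQo₂⟩⟩
  · obtain ⟨p₁, o₁, p₂, rfl, hQo₁⟩ := exists_one (P := Q) (al := p) (by omega)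
    exact ⟨p₁, o₁, p₂, o, q, by simp, Or.inr ⟨hQo₁, hPo⟩⟩

lemma exists_two_same {P : Op α → Bool} {al : List (Op α)} (h2 : 2 ≤ al.countP P) :
    ∃ p o₁ q o₂ s, al = p ++ o₁ :: q ++ o₂ :: s ∧ P o₁ ∧ P o₂ := by
  obtain ⟨p, o, q, rfl, hPo⟩ := exists_one (P := P) (al := al) (by omega)
  have : 1 ≤ p.countP P + q.countP P := by
    simp [List.countP_append, List.countP_cons, hPo] at h2
    omega
  rcases Nat.lt_or_ge 0 (q.countP P) with hh | hh
  · obtain ⟨q₁, o₂, q₂, rfl, hPo₂⟩ := exists_one (P := P) (al := q) (by omega)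
    exact ⟨p, o, q₁, o₂, q₂, by simp, hPo, hPo₂⟩
  · obtain ⟨p₁, o₁, p₂, rfl, hPo₁⟩ := exists_one (P := P) (al := p) (by omega)
    exact ⟨p₁, o₁, p₂, o, q, by simp, hPo₁, hPo⟩

/-- Revert an op: the result aligns the left word with itself. -/
def revert : Op α → List (Op α)
  | .eq a => [.eq a] | .sub a _ => [.eq a] | .del a => [.eq a] | .ins _ => []

@[simp] lemma Lft_revert (o : Op α) : Lft (revert o) = opL o := by
  cases o <;> simp [revert, opL]
@[simp] lemma Rgt_revert (o : Op α) : Rgt (revert o) = opL o := by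
  cases o <;> simp [revert, opL, opR]
@[simp] lemma Cst_revert (o : Op α) : Cst (revert o) = 0 := by
  cases o <;> simp [revert, opC]

/-- Keep only the right-hand side of an op. -/
def keep1 : Op α → List (Op α)
  | .eq a => [.eq a] | .sub _ b => [.eq b] | .del _ => [] | .ins b => [.eq b]

def keep (al : List (Op α)) : List (Op α) := al.flatMap keep1

@[simp] lemma Lft_keep (al : List (Op α)) : Lft (keep al) = Rgt al := by
  induction al with
  | nil => rfl
  | cons o al ih => cases o <;> simp_all [keep, keep1, opL, opR]
@[simp] lemma Rgt_keep (al : List (Op α)) : Rgt (keep al) = Rgt al := by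
  induction al with
  | nil => rfl
  | cons o al ih => cases o <;> simp_all [keep, keep1, opR]
@[simp] lemma Cst_keep (al : List (Op α)) : Cst (keep al) = 0 := by
  induction al with
  | nil => rfl
  | cons o al ih => cases o <;> simp_all [keep, keep1, opC]

/-- Decomposition: pull a length-preserving midpoint `u` two edits from the right word. -/
lemma decomp (al : List (Op α)) (hlen : (Lft al).length = (Rgt al).length)
    (h3 : 3 ≤ Cst al) :
    ∃ u : List α, u.length = (Rgt al).length ∧ lev (Lft al) u + 2 ≤ Cst al ∧
      lev u (Rgt al) ≤ 2 := by
  have hbal := len_balance al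
  have hcnt := cst_counts al
  have hDI : al.countP isDel = al.countP isIns := by omega
  -- select two ops to revert
  have hsel : ∃ p o₁ q o₂ s, al = p ++ o₁ :: q ++ o₂ :: s ∧
      opC o₁ = 1 ∧ opC o₂ = 1 ∧
      (opL o₁).length + (opL o₂).length = (opR o₁).length + (opR o₂).length := by
    rcases Nat.eq_zero_or_pos (al.countP isDel) with hd | hd
    · have hs : 2 ≤ al.countP isSub := by omega
      obtain ⟨p, o₁, q, o₂, s, rfl, h₁, h₂⟩ := exists_two_same hs
      refine ⟨p, o₁, q, o₂, s, rfl, ?_, ?_, ?_⟩ <;>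
        (cases o₁ <;> cases o₂ <;> simp_all [isSub, opC, opL, opR])
    · have hi : 1 ≤ al.countP isIns := by omega
      obtain ⟨p, o₁, q, o₂, s, rfl, hcase⟩ :=
        exists_two (P := isDel) (Q := isIns) (al := al) (by omega) (by omega) (by omega)
          (by intro o; cases o <;> simp [isDel, isIns])
      refine ⟨p, o₁, q, o₂, s, rfl, ?_, ?_, ?_⟩ <;>
        (rcases hcase with ⟨h₁, h₂⟩ | ⟨h₁, h₂⟩ <;>
          cases o₁ <;> cases o₂ <;> simp_all [isDel, isIns, opC, opL, opR])
  obtain ⟨p, o₁, q, o₂, s, rfl, hc₁, hc₂, hlen12⟩ := hsel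
  refine ⟨Rgt (p ++ revert o₁ ++ q ++ revert o₂ ++ s), ?_, ?_, ?_⟩
  · simp [List.length_append]
    omega
  · have hsound := lev_le_Cst (p ++ revert o₁ ++ q ++ revert o₂ ++ s)
    have hL : Lft (p ++ revert o₁ ++ q ++ revert o₂ ++ s) =
        Lft (p ++ o₁ :: q ++ o₂ :: s) := by simp
    have hC : Cst (p ++ revert o₁ ++ q ++ revert o₂ ++ s) + 2 =
        Cst (p ++ o₁ :: q ++ o₂ :: s) := by simp; omega
    rw [hL] at hsound
    omega
  · have hsound := lev_le_Cst (keep p ++ [o₁] ++ keep q ++ [o₂] ++ keep s)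
    have hL : Lft (keep p ++ [o₁] ++ keep q ++ [o₂] ++ keep s) =
        Rgt (p ++ revert o₁ ++ q ++ revert o₂ ++ s) := by simp
    have hR : Rgt (keep p ++ [o₁] ++ keep q ++ [o₂] ++ keep s) =
        Rgt (p ++ o₁ :: q ++ o₂ :: s) := by simp
    have hC : Cst (keep p ++ [o₁] ++ keep q ++ [o₂] ++ keep s) ≤ 2 := by simp; omega
    rw [hL, hR] at hsound
    omega


@[simp] lemma Lft_map_eq (l : List α) : Lft (l.map Op.eq) = l := by
  induction l with
  | nil => rfl
  | cons a l ih => simp [opL, ih]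
@[simp] lemma Rgt_map_eq (l : List α) : Rgt (l.map Op.eq) = l := by
  induction l with
  | nil => rfl
  | cons a l ih => simp [opR, ih]
@[simp] lemma Cst_map_eq (l : List α) : Cst (l.map Op.eq) = 0 := by
  induction l with
  | nil => rfl
  | cons a l ih => simp [opC, ih]

lemma lev_self (l : List α) : lev l l ≤ 0 := by
  simpa using lev_le_Cst (l.map Op.eq)

lemma exists_ofFn {n : ℕ} (u : List α) (h : u.length = n) :
    ∃ f : Fin n → α, List.ofFn f = u := by
  refine ⟨fun i => u.get (Fin.cast h.symm i), ?_⟩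
  apply List.ext_getElem
  · simp [h]
  · intro i h1 h2
    simp

end EditAux
/-- Edit (Levenshtein) distance between two length-`n` sequences over `α`. -/
def editDist {α : Type*} [DecidableEq α] {n : ℕ} (s t : Fin n → α) : ℕ :=
  levenshtein Levenshtein.defaultCost (List.ofFn s) (List.ofFn t)

/-- `B` is a `(d, r)`-guaranteed subset of `Σⁿ`: for every pair of sequences within
edit distance `d`, some sequence of `B` lies in both of their `r`-neighborhoods. -/
def IsGuaranteed {α : Type*} [DecidableEq α] {n : ℕ} (d r : ℕ)
    (B : Set (Fin n → α)) : Prop :=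
  ∀ s t : Fin n → α, editDist s t ≤ d →
    ∃ v ∈ B, editDist s v ≤ r ∧ editDist t v ≤ r

theorem stmt12 {α : Type*} [DecidableEq α] {n : ℕ} (r : ℕ)
    (B : Set (Fin n → α)) (hB : IsGuaranteed r r B) :
    IsGuaranteed (r + 2) (r + 2) B := by
  intro s t hst
  classical
  set L := List.ofFn s with hLdef
  set T := List.ofFn t with hTdef
  have hstL : EditAux.lev L T ≤ r + 2 := hst
  by_cases hsmall : EditAux.lev L T ≤ 2
  · -- use v near s itself
    obtain ⟨v, hvB, hv1, hv2⟩ := hB s s (by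
      have := EditAux.lev_self L
      simpa [editDist] using this.trans (Nat.zero_le r))
    refine ⟨v, hvB, hv1.trans (by omega), ?_⟩
    have htri := EditAux.lev_triangle T L (List.ofFn v)
    have hsym := EditAux.lev_symm_le L T
    have hv1' : EditAux.lev L (List.ofFn v) ≤ r := hv1
    have : EditAux.lev T (List.ofFn v) ≤ 2 + r := by omega
    exact this.trans (by omega)
  · -- decompose
    obtain ⟨al, hal, har, hac⟩ := EditAux.exists_al L T
    have h3 : 3 ≤ EditAux.Cst al := by
      have := EditAux.lev_le_Cst al
      rw [hal, har] at this
      omega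
    have hlen : (EditAux.Lft al).length = (EditAux.Rgt al).length := by
      rw [hal, har]; simp [hLdef, hTdef]
    obtain ⟨u, hulen, hu1, hu2⟩ := EditAux.decomp al hlen h3
    rw [hal] at hu1
    rw [har] at hu2 hulen
    have hun : u.length = n := by rw [hulen, hTdef]; simp
    obtain ⟨uf, hufu⟩ := EditAux.exists_ofFn u hun
    obtain ⟨v, hvB, hv1, hv2⟩ := hB s uf (by
      show EditAux.lev L (List.ofFn uf) ≤ r
      rw [hufu]
      omega)
    refine ⟨v, hvB, hv1.trans (by omega), ?_⟩
    have hv2' : EditAux.lev u (List.ofFn v) ≤ r := by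
      have : EditAux.lev (List.ofFn uf) (List.ofFn v) ≤ r := hv2
      rwa [hufu] at this
    have htri := EditAux.lev_triangle T u (List.ofFn v)
    have hsym := EditAux.lev_symm_le u T
    show EditAux.lev T (List.ofFn v) ≤ r + 2
    omega
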